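/- (Lemma 2.2) Let x ∈ V and 1 ≤ i ≤ d+1, where e_i denotes the i-th standard unit vector of ℝ^{d+1}. If x + e_i ∈ V, then u(x + e_i) − u(x) ∈ {0, 1}. -/

import Mathlib

open scoped ENNReal BigOperators

namespace WedgePaper

/-- A point of `ℤ^{d+1}`, written as (x₁,…,x_d, x_{d+1}). -/
abbrev Pt (d : ℕ) := (Fin d → ℤ) × ℤ

/-- The vertex set `V` of `Wedge(f₁,…,f_d)`:
points `(x₁,…,x_d,n) ∈ ℤ^{d+1}` with `n ≥ 0` and `0 ≤ xᵢ ≤ fᵢ(n)`. -/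
def V (d : ℕ) (f : Fin d → ℕ → ℝ≥0∞) : Set (Pt d) :=
  {x | 0 ≤ x.2 ∧ ∀ i, 0 ≤ x.1 i ∧ ((x.1 i).toNat : ℝ≥0∞) ≤ f i x.2.toNat}

/-- The ℓ¹ distance on `ℤ^{d+1}`. -/
def dist1 (d : ℕ) (x y : Pt d) : ℤ :=
  (∑ i : Fin d, |x.1 i - y.1 i|) + |x.2 - y.2|

/-- The edge relation of `Wedge(f₁,…,f_d)`. -/
def Edge (d : ℕ) (f : Fin d → ℕ → ℝ≥0∞) (x y : Pt d) : Prop :=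
  x ∈ V d f ∧ y ∈ V d f ∧ dist1 d x y = 1

/-- `pfun d h x i = pᵢ(x) = min{m : hᵢ(m) ≥ xᵢ}`. -/
noncomputable def pfun (d : ℕ) (h : Fin d → ℕ → ℕ) (x : Pt d) (i : Fin d) : ℕ :=
  sInf {m : ℕ | x.1 i ≤ (h i m : ℤ)}

/-- `ufun d h x = u(x) = max{x_{d+1}, p₁(x),…,p_d(x)}`. -/
noncomputable def ufun (d : ℕ) (h : Fin d → ℕ → ℕ) (x : Pt d) : ℕ :=
  max x.2.toNat (Finset.univ.sup (pfun d h x))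

/-- `Δ_{d+1}(n)`. -/
def DeltaTop (d : ℕ) (h : Fin d → ℕ → ℕ) : ℕ → Set (Pt d)
  | 0 => {0}
  | (n+1) => {x | x.2 = ((n : ℤ) + 1) ∧ ∀ i, 0 ≤ x.1 i ∧ x.1 i ≤ (h i (n+1) : ℤ)}

/-- `Δᵢ(n)` for `1 ≤ i ≤ d` (empty when `hᵢ(n) = hᵢ(n-1)`). -/
def DeltaSide (d : ℕ) (f : Fin d → ℕ → ℝ≥0∞) (h : Fin d → ℕ → ℕ) (i : Fin d) :
    ℕ → Set (Pt d)
  | 0 => {0}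
  | (n+1) => {x | h i (n+1) = h i n + 1 ∧ x ∈ V d f ∧
      (∀ j, x.1 j ≤ (h j (n+1) : ℤ)) ∧ x.1 i = (h i (n+1) : ℤ) ∧ x.2 ≤ (n : ℤ) + 1}

/-- `∂_n = ⋃_{i=1}^{d+1} Δᵢ(n)`. -/
def bdry (d : ℕ) (f : Fin d → ℕ → ℝ≥0∞) (h : Fin d → ℕ → ℕ) (n : ℕ) : Set (Pt d) :=
  DeltaTop d h n ∪ ⋃ i, DeltaSide d f h i n

/-- `x + eᵢ`, where `eᵢ` is the i-th standard unit vector of `ℤ^{d+1}`. -/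
def addE (d : ℕ) (x : Pt d) (i : Fin (d+1)) : Pt d :=
  if hi : (i : ℕ) < d then (Function.update x.1 ⟨i, hi⟩ (x.1 ⟨i, hi⟩ + 1), x.2)
  else (x.1, x.2 + 1)

/-- A flow on `Wedge(f₁,…,f_d)`: an antisymmetric function vanishing off edges. -/
def IsFlow (d : ℕ) (f : Fin d → ℕ → ℝ≥0∞) (θ : Pt d → Pt d → ℝ) : Prop :=
  (∀ v w, θ v w = - θ w v) ∧ ∀ v w, ¬ Edge d f v w → θ v w = 0

/-- Divergence of `θ` at `v`: `∑_w θ(v,w)`. -/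
noncomputable def divg (d : ℕ) (θ : Pt d → Pt d → ℝ) (v : Pt d) : ℝ := ∑' w, θ v w

/-- Energy of a flow: `(1/2) ∑_{v,w} θ(v,w)²`. -/
noncomputable def energy (d : ℕ) (θ : Pt d → Pt d → ℝ) : ℝ≥0∞ :=
  (1/2 : ℝ≥0∞) * ∑' q : Pt d × Pt d, ENNReal.ofReal (θ q.1 q.2 ^ 2)

/-- A unit flow from the vertex `a` to the set `B`. -/
def IsUnitFlow (d : ℕ) (f : Fin d → ℕ → ℝ≥0∞) (a : Pt d) (B : Set (Pt d))
    (θ : Pt d → Pt d → ℝ) : Prop :=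
  IsFlow d f θ ∧ divg d θ a = 1 ∧ ∀ v, v ∉ B ∪ {a} → divg d θ v = 0

/-- The set `V_x` built from the functions `g_{±i}` (here `gp i = g_i`, `gm i = g_{-i}`). -/
def Vx (d : ℕ) (gp gm : Fin d → ℕ → ℤ) (r s : ℕ) : Set (Pt d) :=
  {y | ∃ n : ℕ, n ≤ r - s ∧ y.2 = (n : ℤ) + (s : ℤ) ∧
    ∀ i, gm i n ≤ y.1 i ∧ y.1 i ≤ gp i n}

/-- `Lᵢ(n) = min{g_{εi}(n) : g_{εi}(n) = g_{εi}(n-1), ε ∈ {-1,1}}` (for `n ≥ 1`). -/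
def Lfun (d : ℕ) (gp gm : Fin d → ℕ → ℤ) (i : Fin d) (n : ℕ) : ℤ :=
  if gm i n = gm i (n-1) then gm i n else gp i n

/-- The map `Γ`. -/
def Gam (d : ℕ) (gp gm : Fin d → ℕ → ℤ) (s : ℕ) (y : Pt d) : Pt d :=
  if y.2 = (s : ℤ) then 0
  else (fun i => |y.1 i - Lfun d gp gm i (y.2 - (s : ℤ)).toNat|, y.2 - (s : ℤ))

/-- The set `H`, a piece of `Wedge(h₁,…,h_d)`. -/
def Hset (d : ℕ) (h : Fin d → ℕ → ℕ) (r s : ℕ) : Set (Pt d) :=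
  {y | ∃ n : ℕ, n ≤ r - s ∧ y.2 = (n : ℤ) ∧ ∀ i, 0 ≤ y.1 i ∧ y.1 i ≤ (h i n : ℤ)}

/-- Lemma 2.2: if x ∈ V and x + eᵢ ∈ V then u(x+eᵢ) - u(x) ∈ {0,1}. -/
theorem stmt_3
    (d : ℕ) (hd : 1 ≤ d) (f : Fin d → ℕ → ℝ≥0∞) (hf : ∀ i, Monotone (f i))
    (h : Fin d → ℕ → ℕ) (h0 : ∀ i, h i 0 = 0)
    (hrec : ∀ (i : Fin d) (n : ℕ),
      ((h i n : ℝ≥0∞) + 1 ≤ f i (n + 1) ∧ h i (n + 1) = h i n + 1) ∨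
      (¬ ((h i n : ℝ≥0∞) + 1 ≤ f i (n + 1)) ∧ h i (n + 1) = h i n)) :
    ∀ x ∈ V d f, ∀ i : Fin (d + 1), addE d x i ∈ V d f →
      ufun d h (addE d x i) = ufun d h x ∨ ufun d h (addE d x i) = ufun d h x + 1 := by
  -- monotonicity of h
  have hmono : ∀ i : Fin d, Monotone (h i) := by
    intro i
    apply monotone_nat_of_le_succ
    intro n
    rcases hrec i n with ⟨_, e⟩ | ⟨_, e⟩ <;> omega
  -- growth lemma
  have hgrow : ∀ (i : Fin d) (n c : ℕ), ((c : ℝ≥0∞) ≤ f i n) →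
      ∀ k, min c k ≤ h i (n + k) := by
    intro i n c hc k
    induction k with
    | zero => simp
    | succ k ih =>
      have hstep : n + (k + 1) = (n + k) + 1 := by ring
      rw [hstep]
      by_cases hcase : c ≤ h i (n + k)
      · calc min c (k + 1) ≤ c := min_le_left _ _
          _ ≤ h i (n + k) := hcase
          _ ≤ h i (n + k + 1) := hmono i (Nat.le_succ _)
      · push_neg at hcase
        have h1 : (h i (n + k) : ℝ≥0∞) + 1 ≤ f i (n + k + 1) := by
          have hle : ((h i (n + k) + 1 : ℕ) : ℝ≥0∞) ≤ (c : ℝ≥0∞) :=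
            Nat.cast_le.mpr hcase
          calc (h i (n + k) : ℝ≥0∞) + 1 = ((h i (n + k) + 1 : ℕ) : ℝ≥0∞) := by
                push_cast; ring
            _ ≤ (c : ℝ≥0∞) := hle
            _ ≤ f i n := hc
            _ ≤ f i (n + k + 1) := hf i (by omega)
        rcases hrec i (n + k) with ⟨_, e⟩ | ⟨hne, _⟩
        · omega
        · exact absurd h1 hne
  -- nonemptiness of the pfun sets
  have hnonempty : ∀ y ∈ V d f, ∀ i : Fin d, ∃ m, y.1 i ≤ (h i m : ℤ) := by
    intro y hy i
    obtain ⟨hy2, hy1⟩ := hy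
    obtain ⟨hyi0, hyif⟩ := hy1 i
    refine ⟨y.2.toNat + (y.1 i).toNat, ?_⟩
    have := hgrow i y.2.toNat (y.1 i).toNat hyif (y.1 i).toNat
    simp only [min_self] at this
    omega
  intro x hx i hi
  by_cases hlt : (i : ℕ) < d
  · -- side case: increment coordinate j
    set j : Fin d := ⟨i, hlt⟩ with hj
    have hye : addE d x i = (Function.update x.1 j (x.1 j + 1), x.2) := by
      simp [addE, hlt, hj]
    rw [hye] at hi ⊢
    set y : Pt d := (Function.update x.1 j (x.1 j + 1), x.2) with hy
    have hyj : y.1 j = x.1 j + 1 := Function.update_self j _ _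
    -- pfun at other coordinates is unchanged
    have hpk : ∀ k : Fin d, k ≠ j → pfun d h y k = pfun d h x k := by
      intro k hk
      simp only [pfun, hy]
      rw [Function.update_of_ne hk]
    -- pfun at j
    have hQdef : pfun d h y j = sInf {m : ℕ | x.1 j + 1 ≤ (h j m : ℤ)} := by
      simp only [pfun, Function.update_self, hyj]
    obtain ⟨mP, hmP⟩ := hnonempty x hx j
    obtain ⟨mQ, hmQ⟩ := hnonempty y hi j
    rw [hyj] at hmQ
    have hQmem : x.1 j + 1 ≤ (h j (pfun d h y j) : ℤ) := by
      rw [hQdef]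
      exact Nat.sInf_mem (⟨mQ, hmQ⟩ : {m : ℕ | x.1 j + 1 ≤ (h j m : ℤ)}.Nonempty)
    have hPmem : x.1 j ≤ (h j (pfun d h x j) : ℤ) :=
      Nat.sInf_mem (⟨mP, hmP⟩ : {m : ℕ | x.1 j ≤ (h j m : ℤ)}.Nonempty)
    have hPQ : pfun d h x j ≤ pfun d h y j := by
      apply Nat.sInf_le
      rw [Set.mem_setOf_eq]
      omega
    -- key bound
    set n : ℕ := x.2.toNat with hn
    set m' : ℕ := max (pfun d h x j) n with hm'
    have hm'h : x.1 j ≤ (h j m' : ℤ) := by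
      have := hmono j (le_max_left (pfun d h x j) n)
      calc x.1 j ≤ (h j (pfun d h x j) : ℤ) := hPmem
        _ ≤ (h j m' : ℤ) := by exact_mod_cast this
    have hQle : pfun d h y j ≤ m' + 1 := by
      by_cases hc2 : x.1 j + 1 ≤ (h j m' : ℤ)
      · have : pfun d h y j ≤ m' := by
          rw [hQdef]
          exact Nat.sInf_le hc2
        omega
      · push_neg at hc2
        have heq : (h j m' : ℤ) = x.1 j := le_antisymm (by omega) hm'h
        obtain ⟨hi2, hi1⟩ := hi
        obtain ⟨hij0, hijf⟩ := hi1 j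
        rw [hyj] at hijf
        obtain ⟨hx2, hx1⟩ := hx
        obtain ⟨hxj0, _⟩ := hx1 j
        have htn : (x.1 j + 1).toNat = h j m' + 1 := by omega
        have hcast : (h j m' : ℝ≥0∞) + 1 ≤ f j (m' + 1) := by
          have h2 : ((h j m' + 1 : ℕ) : ℝ≥0∞) ≤ f j n := by
            rw [← htn]; exact hijf
          calc (h j m' : ℝ≥0∞) + 1 = ((h j m' + 1 : ℕ) : ℝ≥0∞) := by push_cast; ring
            _ ≤ f j n := h2
            _ ≤ f j (m' + 1) := hf j (by omega)
        rcases hrec j m' with ⟨_, e⟩ | ⟨hcon, _⟩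
        · rw [hQdef]
          apply Nat.sInf_le
          rw [Set.mem_setOf_eq, e]
          push_cast
          omega
        · exact absurd hcast hcon
    -- assemble
    have hux : ufun d h x = max n (Finset.univ.sup (pfun d h x)) := rfl
    have huy : ufun d h y = max n (Finset.univ.sup (pfun d h y)) := rfl
    have h1 : ufun d h x ≤ ufun d h y := by
      rw [hux, huy]
      refine max_le_max le_rfl (Finset.sup_mono_fun ?_)
      intro k _
      by_cases hk : k = j
      · subst hk; exact hPQ
      · rw [hpk k hk]
    have h2 : ufun d h y ≤ ufun d h x + 1 := by
      rw [hux, huy]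
      refine max_le (by omega) ?_
      refine Finset.sup_le ?_
      intro k _
      by_cases hk : k = j
      · subst hk
        have hPle : pfun d h x j ≤ Finset.univ.sup (pfun d h x) :=
          Finset.le_sup (Finset.mem_univ j)
        omega
      · rw [hpk k hk]
        have : pfun d h x k ≤ Finset.univ.sup (pfun d h x) :=
          Finset.le_sup (Finset.mem_univ k)
        omega
    omega
  · -- top case: increment last coordinate
    have hye : addE d x i = (x.1, x.2 + 1) := by
      simp [addE, hlt]
    rw [hye]
    have hx2 : 0 ≤ x.2 := hx.1
    have h1 : ufun d h (x.1, x.2 + 1)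
        = max (x.2 + 1).toNat (Finset.univ.sup (pfun d h x)) := rfl
    have h2 : ufun d h x = max x.2.toNat (Finset.univ.sup (pfun d h x)) := rfl
    rw [h1, h2]
    omega

end WedgePaper
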